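/- For s > 0, the operator h_s defined on radial functions of the unit ball by (h_s u)(r) = s^{-1/N'} u(r^s) is a linear isometry of the radial subspace of W^{1,N}_0(B) with respect to the gradient L^N norm, i.e., ‖∇(h_s u)‖_N = ‖∇u‖_N, and the family {h_s}_{s>0} is a multiplicative group: h_s h_t = h_{st}. -/

import Mathlib

open MeasureTheory Set

/-- The nonlinear dilation `h_s` acting on radial profiles: `(h_s v)(r) = s^{-1/N'} v(r^s)`,
where `1/N' = (N-1)/N`. -/
noncomputable def hOp (N : ℕ) (s : ℝ) (v : ℝ → ℝ) : ℝ → ℝ :=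
  fun r => s ^ (-(((N:ℝ) - 1)/N)) * v (r ^ s)

/-- For `s > 0`, `h_s` is a linear operator on radial profiles which is an isometry for the
gradient `L^N` norm, `‖∇(h_s u)‖_N = ‖∇u‖_N` (expressed through the radial Dirichlet
integrals `∫_0^1 |v'(r)|^N r^{N-1} dr`), and the family `{h_s}_{s>0}` is a multiplicative
group: `h_s h_t = h_{st}`. -/
theorem hOp_isometry_group (N : ℕ) (hN : 2 ≤ N) (s : ℝ) (hs : 0 < s)
    (v : ℝ → ℝ) (hv : DifferentiableOn ℝ v (Set.Ioo 0 1)) :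
    (∀ (c : ℝ) (u w : ℝ → ℝ),
        hOp N s (fun r => c * u r + w r) = fun r => c * hOp N s u r + hOp N s w r) ∧
    (∫ r in (0:ℝ)..1, |deriv (hOp N s v) r| ^ N * r ^ (N - 1))
      = (∫ r in (0:ℝ)..1, |deriv v r| ^ N * r ^ (N - 1)) ∧
    (∀ t : ℝ, 0 < t → ∀ u : ℝ → ℝ, ∀ r ∈ Set.Ioo (0:ℝ) 1,
        hOp N s (hOp N t u) r = hOp N (s * t) u r) := by
  have hN0 : (N:ℝ) ≠ 0 := Nat.cast_ne_zero.mpr (by omega)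
  set a : ℝ := ((N:ℝ) - 1)/N with ha
  refine ⟨?_, ?_, ?_⟩
  · intro c u w
    funext r
    simp only [hOp]
    ring
  · -- the isometry property
    have key : ∀ r ∈ Set.Ioo (0:ℝ) 1, HasDerivAt (hOp N s v)
        (s ^ (-a) * (deriv v (r ^ s) * (s * r ^ (s - 1)))) r := by
      intro r hr
      have hrs : r ^ s ∈ Set.Ioo (0:ℝ) 1 :=
        ⟨Real.rpow_pos_of_pos hr.1 s, Real.rpow_lt_one hr.1.le hr.2 hs⟩
      have h1 : HasDerivAt (fun x : ℝ => x ^ s) (s * r ^ (s - 1)) r :=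
        Real.hasDerivAt_rpow_const (Or.inl hr.1.ne')
      have h2 : HasDerivAt v (deriv v (r ^ s)) (r ^ s) :=
        (hv.differentiableAt (isOpen_Ioo.mem_nhds hrs)).hasDerivAt
      exact (h2.comp r h1).const_mul _
    have himg : (fun x : ℝ => x ^ s) '' Set.Ioo 0 1 = Set.Ioo 0 1 := by
      ext ρ
      constructor
      · rintro ⟨x, ⟨hx0, hx1⟩, rfl⟩
        exact ⟨Real.rpow_pos_of_pos hx0 s, Real.rpow_lt_one hx0.le hx1 hs⟩
      · rintro ⟨h0, h1⟩
        refine ⟨ρ ^ (1/s), ⟨Real.rpow_pos_of_pos h0 _,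
          Real.rpow_lt_one h0.le h1 (by positivity)⟩, ?_⟩
        show (ρ ^ (1/s)) ^ s = ρ
        rw [← Real.rpow_mul h0.le, one_div, inv_mul_cancel₀ hs.ne', Real.rpow_one]
    have hInj : Set.InjOn (fun x : ℝ => x ^ s) (Set.Ioo 0 1) := by
      intro x hx y hy h
      exact Real.rpow_left_injOn (x := s) hs.ne' (by exact hx.1.le) hy.1.le h
    have hder : ∀ x ∈ Set.Ioo (0:ℝ) 1,
        HasDerivWithinAt (fun x : ℝ => x ^ s) (s * x ^ (s - 1)) (Set.Ioo 0 1) x :=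
      fun x hx => (Real.hasDerivAt_rpow_const (Or.inl hx.1.ne')).hasDerivWithinAt
    have hcv := integral_image_eq_integral_abs_deriv_smul measurableSet_Ioo hder hInj
      (fun ρ => |deriv v ρ| ^ N * ρ ^ (N - 1))
    rw [himg] at hcv
    rw [intervalIntegral.integral_of_le zero_le_one, intervalIntegral.integral_of_le zero_le_one,
        MeasureTheory.integral_Ioc_eq_integral_Ioo, MeasureTheory.integral_Ioc_eq_integral_Ioo,
        hcv]
    apply MeasureTheory.setIntegral_congr_fun measurableSet_Ioo
    intro r hr
    have hr0 : (0:ℝ) < r := hr.1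
    show |deriv (hOp N s v) r| ^ N * r ^ (N - 1)
        = |s * r ^ (s - 1)| • (|deriv v (r ^ s)| ^ N * (r ^ s) ^ (N - 1))
    have hd : deriv (hOp N s v) r = s ^ (-a) * (deriv v (r ^ s) * (s * r ^ (s - 1))) :=
      (key r hr).deriv
    rw [hd]
    have h1 : |s ^ (-a) * (deriv v (r ^ s) * (s * r ^ (s - 1)))|
        = (s ^ (-a) * (s * r ^ (s - 1))) * |deriv v (r ^ s)| := by
      rw [abs_mul, abs_mul, abs_mul, abs_of_pos (Real.rpow_pos_of_pos hs _), abs_of_pos hs,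
        abs_of_pos (Real.rpow_pos_of_pos hr0 _)]
      ring
    rw [h1, mul_pow, smul_eq_mul, abs_of_pos (by positivity : (0:ℝ) < s * r ^ (s - 1))]
    have h : (s ^ (-a) * (s * r ^ (s - 1))) ^ N * r ^ (N - 1)
        = s * r ^ (s - 1) * (r ^ s) ^ (N - 1) := by
      have c1 : r ^ (N - 1) = r ^ (((N:ℝ) - 1)) := by
        rw [← Real.rpow_natCast r (N - 1), Nat.cast_sub (by omega), Nat.cast_one]
      have c2 : (r ^ s) ^ (N - 1) = r ^ (s * ((N:ℝ) - 1)) := by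
        rw [← Real.rpow_natCast (r ^ s) (N - 1), Nat.cast_sub (by omega), Nat.cast_one,
          ← Real.rpow_mul hr0.le]
      have c3 : (s ^ (-a)) ^ N = s ^ ((-a) * N) := by
        rw [← Real.rpow_natCast (s ^ (-a)) N, ← Real.rpow_mul hs.le]
      have c4 : (r ^ (s - 1)) ^ N = r ^ ((s - 1) * N) := by
        rw [← Real.rpow_natCast (r ^ (s - 1)) N, ← Real.rpow_mul hr0.le]
      have c5 : (s:ℝ) ^ N = s ^ ((N:ℝ)) := (Real.rpow_natCast s N).symm
      rw [mul_pow, mul_pow, c1, c2, c3, c4, c5]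
      rw [show s ^ (-a * (N:ℝ)) * (s ^ ((N:ℝ)) * r ^ ((s - 1) * (N:ℝ))) * r ^ ((N:ℝ) - 1)
            = s ^ (-a * (N:ℝ) + (N:ℝ)) * r ^ ((s - 1) * (N:ℝ) + ((N:ℝ) - 1)) from by
          rw [Real.rpow_add hs, Real.rpow_add hr0]; ring]
      rw [show -a * (N:ℝ) + (N:ℝ) = 1 by rw [ha]; field_simp; ring, Real.rpow_one,
        show (s - 1) * (N:ℝ) + ((N:ℝ) - 1) = (s - 1) + s * ((N:ℝ) - 1) by ring,
        Real.rpow_add hr0]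
      ring
    calc (s ^ (-a) * (s * r ^ (s - 1))) ^ N * |deriv v (r ^ s)| ^ N * r ^ (N - 1)
        = |deriv v (r ^ s)| ^ N * ((s ^ (-a) * (s * r ^ (s - 1))) ^ N * r ^ (N - 1)) := by ring
      _ = |deriv v (r ^ s)| ^ N * (s * r ^ (s - 1) * (r ^ s) ^ (N - 1)) := by rw [h]
      _ = s * r ^ (s - 1) * (|deriv v (r ^ s)| ^ N * (r ^ s) ^ (N - 1)) := by ring
  · intro t ht u r hr
    simp only [hOp]
    rw [← Real.rpow_mul hr.1.le, mul_comm s t, Real.mul_rpow ht.le hs.le]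
    ring_nf
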